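/- For a PSO 𝔅 and subsets A, B ⊆ I_m, 𝔅(int Γ_A) ⊆ int Γ_B if and only if 𝔅(x⁰) ∈ int Γ_B for some x⁰ ∈ int Γ_A. -/

import Mathlib

noncomputable def PSO (m l : ℕ) (P : (Fin l → Fin m) → Fin m → ℝ)
    (x : Fin m → ℝ) : Fin m → ℝ :=
  fun k => ∑ i : Fin l → Fin m, (∏ s, x (i s)) * P i k

def supp {m : ℕ} (x : Fin m → ℝ) : Set (Fin m) := {k | x k ≠ 0}

def intGamma (m : ℕ) (A : Set (Fin m)) : Set (Fin m → ℝ) :=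
  {x ∈ stdSimplex ℝ (Fin m) | supp x = A}

lemma PSO_mem_simplex (m l : ℕ) (P : (Fin l → Fin m) → Fin m → ℝ)
    (hP : ∀ i, P i ∈ stdSimplex ℝ (Fin m)) (x : Fin m → ℝ)
    (hx : x ∈ stdSimplex ℝ (Fin m)) : PSO m l P x ∈ stdSimplex ℝ (Fin m) := by
  constructor
  · intro k
    apply Finset.sum_nonneg
    intro i _
    exact mul_nonneg (Finset.prod_nonneg fun s _ => hx.1 _) ((hP i).1 k)
  · show ∑ k, ∑ i : Fin l → Fin m, (∏ s, x (i s)) * P i k = 1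
    rw [Finset.sum_comm]
    have : ∀ i : Fin l → Fin m, ∑ k, (∏ s, x (i s)) * P i k = ∏ s, x (i s) := by
      intro i
      rw [← Finset.mul_sum, (hP i).2, mul_one]
    simp only [this]
    have := Finset.prod_univ_sum (fun _ : Fin l => (Finset.univ : Finset (Fin m)))
      (fun _ j => x j)
    simp only [hx.2, Finset.prod_const_one, Fintype.piFinset_univ] at this
    exact this.symm

lemma PSO_supp (m l : ℕ) (P : (Fin l → Fin m) → Fin m → ℝ)
    (hP : ∀ i, P i ∈ stdSimplex ℝ (Fin m)) (x : Fin m → ℝ)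
    (hx : x ∈ stdSimplex ℝ (Fin m)) :
    supp (PSO m l P x) = {k | ∃ i : Fin l → Fin m, (∀ s, i s ∈ supp x) ∧ P i k ≠ 0} := by
  ext k
  simp only [supp, Set.mem_setOf_eq, PSO]
  rw [← not_iff_not]
  push_neg
  constructor
  · intro h i hi
    by_contra hP0
    have hterm : (∏ s, x (i s)) * P i k > 0 := by
      apply mul_pos
      · exact Finset.prod_pos fun s _ => lt_of_le_of_ne (hx.1 _) (Ne.symm (hi s))
      · exact lt_of_le_of_ne ((hP i).1 k) (Ne.symm hP0)
    have : (0:ℝ) < ∑ i : Fin l → Fin m, (∏ s, x (i s)) * P i k := by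
      apply Finset.sum_pos' _ ⟨i, Finset.mem_univ i, hterm⟩
      intro j _
      exact mul_nonneg (Finset.prod_nonneg fun s _ => hx.1 _) ((hP j).1 k)
    exact this.ne' h
  · intro h
    apply Finset.sum_eq_zero
    intro i _
    by_cases hi : ∀ s, x (i s) ≠ 0
    · rw [h i hi, mul_zero]
    · push_neg at hi
      obtain ⟨s, hs⟩ := hi
      rw [Finset.prod_eq_zero (Finset.mem_univ s) hs, zero_mul]

theorem PSO_mapsTo_iff_exists (m l : ℕ) (P : (Fin l → Fin m) → Fin m → ℝ)
    (hP : ∀ i, P i ∈ stdSimplex ℝ (Fin m)) (A B : Set (Fin m)) (hA : A.Nonempty) :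
    Set.MapsTo (PSO m l P) (intGamma m A) (intGamma m B) ↔
      ∃ x₀ ∈ intGamma m A, PSO m l P x₀ ∈ intGamma m B := by
  classical
  constructor
  · intro h
    -- construct a point in intGamma m A
    set c : ℝ := (A.toFinite.toFinset.card : ℝ)⁻¹ with hc
    have hcard : 0 < A.toFinite.toFinset.card := by
      rw [Finset.card_pos]
      obtain ⟨a, ha⟩ := hA
      exact ⟨a, A.toFinite.mem_toFinset.mpr ha⟩
    have hcpos : 0 < c := by positivity
    set x₀ : Fin m → ℝ := fun k => if k ∈ A then c else 0 with hx₀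
    have hmem : x₀ ∈ intGamma m A := by
      refine ⟨⟨fun k => ?_, ?_⟩, ?_⟩
      · simp only [hx₀]
        split <;> [exact hcpos.le; rfl]
      · have h1 : ∑ k, x₀ k = ∑ k ∈ Finset.univ.filter (· ∈ A), c := by
          rw [Finset.sum_filter]
        have h2 : Finset.univ.filter (· ∈ A) = A.toFinite.toFinset := by
          ext k; simp
        rw [h1, h2, Finset.sum_const, nsmul_eq_mul, hc,
          mul_inv_cancel₀ (Nat.cast_ne_zero.mpr hcard.ne')]
      · ext k
        simp only [supp, Set.mem_setOf_eq, hx₀]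
        by_cases hk : k ∈ A
        · simp [hk, hcpos.ne']
        · simp [hk]
    exact ⟨x₀, hmem, h hmem⟩
  · rintro ⟨x₀, ⟨hx₀s, hx₀supp⟩, hB⟩
    intro x ⟨hxs, hxsupp⟩
    refine ⟨PSO_mem_simplex m l P hP x hxs, ?_⟩
    rw [PSO_supp m l P hP x hxs, hxsupp]
    rw [← hB.2, PSO_supp m l P hP x₀ hx₀s, hx₀supp]
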